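/- Let an algorithm assign jobs to $n$ identical servers of capacity $C$, with all job weights in $[0, \epsilon]$ where $2\epsilon < C$. If the algorithm either (a) at every time step assigns the $n$ largest-weight available jobs (in which case it is optimal), or (b) terminates when every server $i$ has assigned weight $W(A_i) \ge C - 2\epsilon$, then the total assigned weight is at least $(1 - 2\epsilon/C)$ times the optimal total weight. -/

import Mathlib

/-- if the algorithm is either optimal, or terminates with every
server loaded to at least `C - 2ε`, then its total weight is at least
`(1 - 2ε/C)` times the optimum (which is at most `n·C`). -/
theorem stmt10 (n : ℕ) (C ε OPT : ℝ) (hC : 0 < C) (hε : 0 ≤ ε) (h2ε : 2 * ε < C)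
    (hOPT0 : 0 ≤ OPT) (hOPTnC : OPT ≤ n * C) (A : Fin n → ℝ)
    (hcase : (∑ i, A i) = OPT ∨ (∀ i, C - 2 * ε ≤ A i)) :
    (1 - 2 * ε / C) * OPT ≤ ∑ i, A i := by
  have hfac : 0 ≤ 1 - 2 * ε / C := by
    have : 2 * ε / C ≤ 1 := by
      rw [div_le_one hC]; linarith
    linarith
  rcases hcase with h | h
  · rw [h]
    nlinarith [mul_nonneg (div_nonneg (by linarith : (0:ℝ) ≤ 2*ε) hC.le) hOPT0]
  · have h1 : (n : ℝ) * (C - 2 * ε) ≤ ∑ i, A i := by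
      calc (n : ℝ) * (C - 2 * ε) = ∑ _i : Fin n, (C - 2 * ε) := by
            simp [Finset.sum_const, mul_comm]; ring
        _ ≤ ∑ i, A i := Finset.sum_le_sum fun i _ => h i
    have h2 : (1 - 2 * ε / C) * OPT ≤ (1 - 2 * ε / C) * (n * C) :=
      mul_le_mul_of_nonneg_left hOPTnC hfac
    have h3 : (1 - 2 * ε / C) * (n * C) = (n : ℝ) * (C - 2 * ε) := by
      field_simp
    linarith
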